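/- If R is a real quadratically closed field and x ∈ R^× with x < 0, then ⟨−1⟩[x] = [x] in RP(R). Consequently, the square-class group R^×/(R^×)² acts trivially on the entire refined pre-Bloch group RP(R). -/

import Mathlib

open scoped Classical

variable (F : Type) [Field F]

/-- The subgroup of squares in `F^×`. -/
def sqSubgroup : Subgroup Fˣ := MonoidHom.range (powMonoidHom 2 : Fˣ →* Fˣ)

/-- The square class group `F^×/(F^×)²`. -/
def SqClassGroup : Type := Fˣ ⧸ sqSubgroup F

instance : CommGroup (SqClassGroup F) := inferInstanceAs (CommGroup (Fˣ ⧸ sqSubgroup F))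

/-- The group ring `R_F = ℤ[F^×/(F^×)²]`. -/
abbrev GrpRing := MonoidAlgebra ℤ (SqClassGroup F)

/-- `⟨x⟩ ∈ R_F`, the square class of `x ∈ F^×` (with the junk convention `⟨0⟩ = 1`). -/
noncomputable def cls (x : F) : GrpRing F :=
  if h : x = 0 then 1
  else MonoidAlgebra.of ℤ (SqClassGroup F)
    (QuotientGroup.mk (Units.mk0 x h) : Fˣ ⧸ sqSubgroup F)

/-- The relators of the refined pre-Bloch group: `[0]`, `[1]` and the refined five-term
relators `S_{x,y}`, inside the free `R_F`-module on the set `F` of generator labels. -/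
noncomputable def refinedRels : Set (F →₀ GrpRing F) :=
  {Finsupp.single (0 : F) 1, Finsupp.single (1 : F) 1} ∪
  {z | ∃ x y : F, x ≠ 0 ∧ x ≠ 1 ∧ y ≠ 0 ∧ y ≠ 1 ∧ x ≠ y ∧
    z = Finsupp.single x 1 - Finsupp.single y 1
        + Finsupp.single (y / x) (cls F x)
        - Finsupp.single ((1 - x⁻¹) / (1 - y⁻¹)) (cls F (x⁻¹ - 1))
        + Finsupp.single ((1 - x) / (1 - y)) (cls F (1 - x))}

/-- The refined pre-Bloch group `RP(F)`: the `R_F`-module with generators `[x]`, `x ∈ F^×`,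
subject to `[1] = 0` and the refined five-term relations `S_{x,y}`. -/
abbrev RP := (F →₀ GrpRing F) ⧸ Submodule.span (GrpRing F) (refinedRels F)

/-- The generator `[x]` of `RP(F)`. -/
noncomputable def gen (x : F) : RP F :=
  Submodule.Quotient.mk (Finsupp.single x 1)

/-- `ψ₁(x) = [x] + ⟨-1⟩[x⁻¹]`. -/
noncomputable def psi1 (x : F) : RP F := gen F x + cls F (-1) • gen F x⁻¹

/-- `ψ₂(x) = ⟨x⁻¹-1⟩[x] + ⟨1-x⟩[x⁻¹]` for `x ≠ 1`, and `ψ₂(1) = 0`. -/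
noncomputable def psi2 (x : F) : RP F :=
  if x = 1 then 0 else cls F (x⁻¹ - 1) • gen F x + cls F (1 - x) • gen F x⁻¹


section Basics

variable {F : Type} [Field F]

lemma cls_ne_zero (x : F) (hx : x ≠ 0) :
    cls F x = MonoidAlgebra.of ℤ (SqClassGroup F)
      (QuotientGroup.mk (Units.mk0 x hx) : Fˣ ⧸ sqSubgroup F) := by
  rw [cls, dif_neg hx]

lemma cls_one' : cls F 1 = 1 := by
  rw [cls_ne_zero (1 : F) one_ne_zero]
  have : (Units.mk0 (1 : F) one_ne_zero) = 1 := by ext; simp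
  rw [this]
  simp [MonoidAlgebra.one_def]
  rfl

lemma cls_mul (x y : F) (hx : x ≠ 0) (hy : y ≠ 0) :
    cls F (x * y) = cls F x * cls F y := by
  rw [cls_ne_zero x hx, cls_ne_zero y hy, cls_ne_zero (x*y) (mul_ne_zero hx hy)]
  refine (congrArg (MonoidAlgebra.of ℤ (SqClassGroup F)) ?_).trans (map_mul _ _ _)
  erw [← QuotientGroup.mk_mul]
  congr 1
  ext; simp

lemma mk_single (a : F) (b : GrpRing F) :
    (Submodule.Quotient.mk (Finsupp.single a b) : RP F) = b • gen F a := by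
  rw [gen, ← Submodule.Quotient.mk_smul, Finsupp.smul_single, smul_eq_mul, mul_one]

lemma gen_zero : gen F 0 = 0 := by
  rw [gen, Submodule.Quotient.mk_eq_zero]
  exact Submodule.subset_span (Or.inl (Or.inl rfl))

lemma gen_one : gen F 1 = 0 := by
  rw [gen, Submodule.Quotient.mk_eq_zero]
  exact Submodule.subset_span (Or.inl (Or.inr rfl))

lemma fiveTerm (x y : F) (hx0 : x ≠ 0) (hx1 : x ≠ 1) (hy0 : y ≠ 0) (hy1 : y ≠ 1)
    (hxy : x ≠ y) :
    gen F x - gen F y + cls F x • gen F (y / x)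
      - cls F (x⁻¹ - 1) • gen F ((1 - x⁻¹) / (1 - y⁻¹))
      + cls F (1 - x) • gen F ((1 - x) / (1 - y)) = 0 := by
  have hz : (Finsupp.single x 1 - Finsupp.single y 1
        + Finsupp.single (y / x) (cls F x)
        - Finsupp.single ((1 - x⁻¹) / (1 - y⁻¹)) (cls F (x⁻¹ - 1))
        + Finsupp.single ((1 - x) / (1 - y)) (cls F (1 - x))) ∈ refinedRels F :=
    Or.inr ⟨x, y, hx0, hx1, hy0, hy1, hxy, rfl⟩
  have h0 : (Submodule.Quotient.mk (Finsupp.single x 1 - Finsupp.single y 1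
        + Finsupp.single (y / x) (cls F x)
        - Finsupp.single ((1 - x⁻¹) / (1 - y⁻¹)) (cls F (x⁻¹ - 1))
        + Finsupp.single ((1 - x) / (1 - y)) (cls F (1 - x))) : RP F) = 0 := by
    rw [Submodule.Quotient.mk_eq_zero]
    exact Submodule.subset_span hz
  rw [Submodule.Quotient.mk_add, Submodule.Quotient.mk_sub, Submodule.Quotient.mk_add,
    Submodule.Quotient.mk_sub] at h0
  rw [mk_single, mk_single, mk_single, mk_single, mk_single, one_smul, one_smul] at h0
  exact h0

end Basics
section Ord

variable {R : Type} [Field R] [LinearOrder R] [IsStrictOrderedRing R]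

lemma cls_pos (hRQC : ∀ x : R, 0 < x → ∃ a : R, a ^ 2 = x) (x : R) (hx : 0 < x) :
    cls R x = 1 := by
  obtain ⟨a, ha⟩ := hRQC x hx
  have ha0 : a ≠ 0 := by
    rintro rfl; rw [zero_pow (by norm_num)] at ha; exact absurd ha.symm (ne_of_gt hx)
  rw [cls_ne_zero x hx.ne']
  have hmem : Units.mk0 x hx.ne' ∈ sqSubgroup R := by
    refine ⟨Units.mk0 a ha0, ?_⟩
    ext
    simp [powMonoidHom, ← ha]
  have : (QuotientGroup.mk (Units.mk0 x hx.ne') : SqClassGroup R) = 1 :=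
    (QuotientGroup.eq_one_iff _).2 hmem
  rw [this]
  exact map_one _

lemma cls_neg (hRQC : ∀ x : R, 0 < x → ∃ a : R, a ^ 2 = x) (x : R) (hx : x < 0) :
    cls R x = cls R (-1) := by
  have h : x = (-1) * (-x) := by ring
  rw [h, cls_mul (-1) (-x) (by norm_num) (by linarith),
    cls_pos hRQC (-x) (by linarith), mul_one]

lemma sigma_mul_self : (cls R (-1)) * (cls R (-1)) = 1 := by
  rw [← cls_mul (-1) (-1) (by norm_num) (by norm_num)]
  norm_num [cls_one']

lemma sigma_sigma_smul (m : RP R) : cls R (-1) • cls R (-1) • m = m := by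
  rw [smul_smul, sigma_mul_self, one_smul]

end Ord
noncomputable def Del {R : Type} [Field R] [LinearOrder R] [IsStrictOrderedRing R] (a : R) : RP R :=
  cls R (-1) • gen R a - gen R a

section Main

variable {R : Type} [Field R] [LinearOrder R] [IsStrictOrderedRing R]

set_option maxHeartbeats 2000000 in
lemma FE (hRQC : ∀ x : R, 0 < x → ∃ a : R, a ^ 2 = x) (x : R) (hx : x < 0) :
    cls R (-1) • gen R x = gen R x ∧
      Del (1 - x) = Del (((1 - x) / x) ^ 2) := by
  have hx0 : x ≠ 0 := hx.ne
  have h1x : (0:R) < 1 - x := by linarith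
  have hT : (1 - x) / x < 0 := div_neg_of_pos_of_neg h1x hx
  have hT0 : (1 - x) / x ≠ 0 := hT.ne
  have hTlt : (1 - x) / x < -1 := by rw [div_lt_iff_of_neg hx]; linarith
  have hT2 : 1 < ((1 - x) / x) ^ 2 := by nlinarith
  -- F instance : S_{x, 1-x}
  have F := fiveTerm x (1 - x) hx0 (ne_of_lt (by linarith)) h1x.ne'
    (by intro h; apply hx0; linarith) (ne_of_lt (by linarith))
  have e1 : x⁻¹ - 1 = (1 - x) / x := by field_simp
  have hinv1 : (1 - x)⁻¹ < 1 := by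
    have hh := mul_inv_cancel₀ h1x.ne'
    nlinarith [inv_pos.2 h1x]
  have e2 : (1 - x⁻¹) / (1 - (1 - x)⁻¹) = ((1 - x) / x) ^ 2 := by
    rw [div_pow, div_eq_div_iff (by linarith) (pow_ne_zero 2 hx0)]
    field_simp
    ring
  have e3 : (1 - x) / (1 - (1 - x)) = (1 - x) / x := by congr 1; ring
  rw [e1, e2, e3, cls_neg hRQC x hx, cls_neg hRQC _ hT, cls_pos hRQC _ h1x, one_smul] at F
  -- E instance : S_{T, T^2}
  have hT1 : (1 - x) / x ≠ 1 := ne_of_lt (by linarith)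
  have hT20 : ((1 - x) / x) ^ 2 ≠ 0 := pow_ne_zero 2 hT0
  have hT21 : ((1 - x) / x) ^ 2 ≠ 1 := ne_of_gt hT2
  have hTT : (1 - x) / x ≠ ((1 - x) / x) ^ 2 := ne_of_lt (by nlinarith)
  have E := fiveTerm ((1 - x) / x) (((1 - x) / x) ^ 2) hT0 hT1 hT20 hT21 hTT
  have f1 : ((1 - x) / x) ^ 2 / ((1 - x) / x) = (1 - x) / x := by
    rw [sq, mul_div_assoc, div_self hT0, mul_one]
  have h12 : (1:R) - 2 * x ≠ 0 := ne_of_gt (by linarith)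
  have f2 : (1 - ((1 - x) / x)⁻¹) / (1 - (((1 - x) / x) ^ 2)⁻¹) = 1 - x := by
    rw [div_pow, inv_div, inv_div]
    have hlt : x ^ 2 / (1 - x) ^ 2 < 1 := by
      rw [div_lt_one (pow_pos h1x 2)]; nlinarith
    rw [div_eq_iff (by linarith : (1:R) - x ^ 2 / (1 - x) ^ 2 ≠ 0)]
    field_simp
    ring
  have f3 : (1 - (1 - x) / x) / (1 - ((1 - x) / x) ^ 2) = x := by
    rw [div_eq_iff (by linarith : (1:R) - ((1 - x) / x) ^ 2 ≠ 0)]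
    field_simp
    ring
  have hTi : ((1 - x) / x)⁻¹ - 1 < 0 := by
    have : ((1 - x) / x)⁻¹ < 0 := inv_lt_zero.2 hT
    linarith
  have h1T : (0:R) < 1 - (1 - x) / x := by linarith
  rw [f1, f2, f3, cls_neg hRQC _ hT, cls_neg hRQC _ hTi, cls_pos hRQC _ h1T, one_smul] at E
  have F' := congrArg (fun m => cls R (-1) • m) F
  simp only [smul_add, smul_sub, smul_zero, sigma_sigma_smul] at F'
  constructor
  · have h := sub_eq_zero_of_eq (F'.trans E.symm)
    rw [← sub_eq_zero, ← h]
    abel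
  · have h := sub_eq_zero_of_eq (F.trans E.symm)
    show cls R (-1) • gen R (1 - x) - gen R (1 - x)
        = cls R (-1) • gen R (((1 - x) / x) ^ 2) - gen R (((1 - x) / x) ^ 2)
    rw [← sub_eq_zero, ← h]
    abel

lemma Del_neg (hRQC : ∀ x : R, 0 < x → ∃ a : R, a ^ 2 = x) (x : R) (hx : x < 0) :
    Del x = 0 := by
  rw [Del, (FE hRQC x hx).1, sub_self]

set_option maxHeartbeats 2000000 in
lemma L2 (hRQC : ∀ x : R, 0 < x → ∃ a : R, a ^ 2 = x) (b : R) (hb : 0 < b) (hb1 : b ≠ 1) :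
    Del b + Del b⁻¹ = Del ((b ^ 2)⁻¹) := by
  have hb0 : b ≠ 0 := hb.ne'
  have hnb : -b < 0 := by linarith
  have hnbi : (-b)⁻¹ < 0 := inv_lt_zero.2 hnb
  have hne : -b ≠ (-b)⁻¹ := by
    intro h
    apply hb1
    have hsq : b ^ 2 = 1 := by
      have := congrArg (fun z => z * (-b)) h
      simp only [inv_mul_cancel₀ (show (-b) ≠ 0 by simpa using hb0)] at this
      nlinarith [this]
    have h2 : (b - 1) * (b + 1) = 0 := by linear_combination hsq
    rcases mul_eq_zero.1 h2 with h3 | h3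
    · linarith
    · linarith
  have A := fiveTerm (-b) ((-b)⁻¹) (by simpa using hb0) (ne_of_lt (by linarith))
    (inv_ne_zero (by simpa using hb0)) (ne_of_lt (by linarith)) hne
  have g1 : (-b)⁻¹ / (-b) = (b ^ 2)⁻¹ := by
    field_simp
  have g2 : (1 - (-b)⁻¹) / (1 - ((-b)⁻¹)⁻¹) = b⁻¹ := by
    rw [inv_inv, inv_neg]
    rw [div_eq_iff (show (1:R) - -b ≠ 0 by intro h; nlinarith [h])]
    field_simp
    ring
  have g3 : (1 - -b) / (1 - (-b)⁻¹) = b := by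
    rw [inv_neg]
    rw [div_eq_iff (show (1:R) - -b⁻¹ ≠ 0 from ne_of_gt (by nlinarith [inv_pos.2 hb]))]
    field_simp
    ring
  have hni : (-b)⁻¹ - 1 < 0 := by linarith
  have h1nb : (0:R) < 1 - -b := by linarith
  rw [g1, g2, g3, cls_neg hRQC _ hnb, cls_neg hRQC _ hni, cls_pos hRQC _ h1nb, one_smul] at A
  have A' := congrArg (fun m => cls R (-1) • m) A
  simp only [smul_add, smul_sub, smul_zero, sigma_sigma_smul] at A'
  rw [(FE hRQC (-b) hnb).1, (FE hRQC ((-b)⁻¹) hnbi).1] at A'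
  have h := sub_eq_zero_of_eq (A'.trans A.symm)
  simp only [Del]
  rw [← sub_eq_zero, ← h]
  abel

lemma Dinv (hRQC : ∀ x : R, 0 < x → ∃ a : R, a ^ 2 = x) (v : R) (hv : 0 < v) :
    Del v = Del v⁻¹ := by
  by_cases hv1 : v = 1
  · subst hv1; rw [inv_one]
  · obtain ⟨a, ha⟩ := hRQC v hv
    have ha0 : a ≠ 0 := by
      rintro rfl
      rw [zero_pow (by norm_num)] at ha
      exact hv.ne ha
    have hs : 0 < |a| := abs_pos.2 ha0
    have hs2 : |a| ^ 2 = v := by rw [sq_abs]; exact ha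
    have hs1 : |a| ≠ 1 := by
      intro h; apply hv1; rw [← hs2, h, one_pow]
    have h1 := L2 hRQC |a| hs hs1
    have h2 := L2 hRQC |a|⁻¹ (inv_pos.2 hs) (by
      intro h; apply hs1; rw [← inv_inv |a|, h, inv_one])
    rw [inv_inv, show ((|a|⁻¹) ^ 2)⁻¹ = |a| ^ 2 by rw [← inv_pow, inv_inv]] at h2
    rw [hs2] at h1 h2
    rw [← h2, ← h1]
    exact add_comm _ _

lemma Dsq (hRQC : ∀ x : R, 0 < x → ∃ a : R, a ^ 2 = x) (b : R) (hb : 0 < b) (hb1 : b ≠ 1) :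
    Del (b ^ 2) = Del b + Del b := by
  have h := L2 hRQC b⁻¹ (inv_pos.2 hb) (by
    intro h; apply hb1; rw [← inv_inv b, h, inv_one])
  rw [inv_inv, show ((b⁻¹) ^ 2)⁻¹ = b ^ 2 by rw [← inv_pow, inv_inv]] at h
  rw [← h, ← Dinv hRQC b hb]

set_option maxHeartbeats 2000000 in
lemma Tors (hRQC : ∀ x : R, 0 < x → ∃ a : R, a ^ 2 = x) (v : R) (hv : 1 < v) :
    Del v + Del v = 0 := by
  have hv0 : (0:R) < v := by linarith
  have hx : 1 - v < 0 := by linarith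
  have h1 := (FE hRQC (1 - v) hx).2
  rw [show (1:R) - (1 - v) = v from by ring] at h1
  -- h1 : Del v = Del ((v / (1 - v)) ^ 2)
  have F := fiveTerm v (1 - v) hv0.ne' hv.ne' (ne_of_lt hx)
    (by intro h; apply hv0.ne'; linarith) (ne_of_lt (by linarith)).symm
  have e1 : v⁻¹ - 1 = (1 - v) / v := by field_simp
  have hd : (1:R) - (1 - v)⁻¹ ≠ 0 := by
    have h2 : (1 - v)⁻¹ < 0 := inv_lt_zero.2 hx
    exact ne_of_gt (by linarith)
  have e2 : (1 - v⁻¹) / (1 - (1 - v)⁻¹) = ((1 - v) / v) ^ 2 := by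
    rw [div_pow, div_eq_div_iff hd (pow_ne_zero 2 hv0.ne')]
    field_simp [show (1:R) - v ≠ 0 from ne_of_lt hx]
    ring
  have e3 : (1 - v) / (1 - (1 - v)) = (1 - v) / v := by congr 1; ring
  have hT' : (1 - v) / v < 0 := div_neg_of_neg_of_pos hx hv0
  rw [e1, e2, e3, cls_pos hRQC _ hv0, one_smul, cls_neg hRQC _ hT', cls_neg hRQC _ hx] at F
  have F' := congrArg (fun m => cls R (-1) • m) F
  simp only [smul_add, smul_sub, smul_zero, sigma_sigma_smul] at F'
  rw [(FE hRQC (1 - v) hx).1] at F'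
  have h := sub_eq_zero_of_eq (F'.trans F.symm)
  -- h encodes : Del v + Del (((1-v)/v)^2) = 0
  have hT'0 : (1 - v) / v ≠ 0 := hT'.ne
  have hpos : (0:R) < ((1 - v) / v) ^ 2 :=
    lt_of_le_of_ne (sq_nonneg _) (Ne.symm (pow_ne_zero 2 hT'0))
  have hlink : Del (((1 - v) / v) ^ 2) = Del ((v / (1 - v)) ^ 2) := by
    rw [Dinv hRQC _ hpos, ← inv_pow, inv_div]
  nth_rewrite 2 [h1]
  rw [← hlink, ← h]
  simp only [Del]
  abel

lemma Dgt1 (hRQC : ∀ x : R, 0 < x → ∃ a : R, a ^ 2 = x) (v : R) (hv : 1 < v) :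
    Del v = 0 := by
  obtain ⟨a, ha⟩ := hRQC v (by linarith)
  have ha0 : a ≠ 0 := by
    rintro rfl
    rw [zero_pow (by norm_num)] at ha
    linarith
  have hs : 0 < |a| := abs_pos.2 ha0
  have hs2 : |a| ^ 2 = v := by rw [sq_abs]; exact ha
  have hs1 : 1 < |a| := by nlinarith
  rw [← hs2, Dsq hRQC |a| hs (ne_of_gt hs1)]
  exact Tors hRQC |a| hs1

lemma Del_pos (hRQC : ∀ x : R, 0 < x → ∃ a : R, a ^ 2 = x) (v : R) (hv : 0 < v) :
    Del v = 0 := by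
  rcases lt_trichotomy v 1 with h | h | h
  · rw [Dinv hRQC v hv]
    have hinv : 1 < v⁻¹ := by
      have hh := mul_inv_cancel₀ hv.ne'
      nlinarith [inv_pos.2 hv]
    exact Dgt1 hRQC v⁻¹ hinv
  · subst h
    rw [Del, gen_one, smul_zero, sub_zero]
  · exact Dgt1 hRQC v h

lemma genAll (hRQC : ∀ x : R, 0 < x → ∃ a : R, a ^ 2 = x) (y : R) :
    cls R (-1) • gen R y = gen R y := by
  rcases lt_trichotomy y 0 with h | h | h
  · exact (FE hRQC y h).1
  · subst h
    rw [gen_zero, smul_zero]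
  · have := Del_pos hRQC y h
    rw [Del, sub_eq_zero] at this
    exact this

end Main

/-- If `R` is a real quadratically closed field and `x < 0` then `⟨-1⟩[x] = [x]` in `RP(R)`.
Consequently, the square class group `R^×/(R^×)²` acts trivially on all of `RP(R)`. -/
theorem cls_neg_one_smul_gen_neg_and_trivial_action (R : Type) [Field R] [LinearOrder R] [IsStrictOrderedRing R]
    (hRQC : ∀ x : R, 0 < x → ∃ a : R, a ^ 2 = x) :
    (∀ x : R, x < 0 → cls R (-1) • gen R x = gen R x) ∧
    (∀ x : R, x ≠ 0 → ∀ m : RP R, cls R x • m = m) := by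
  constructor
  · intro x hx
    exact (FE hRQC x hx).1
  · intro x hx m
    have key : ∀ m : RP R, cls R (-1) • m = m := by
      intro m
      obtain ⟨f, rfl⟩ := Submodule.Quotient.mk_surjective _ m
      induction f using Finsupp.induction with
      | zero => simp
      | single_add a b f ha' hb ih =>
        rw [Submodule.Quotient.mk_add, smul_add, ih, mk_single,
          smul_comm, genAll hRQC a]
    rcases hx.lt_or_gt with h | h
    · rw [cls_neg hRQC x h]
      exact key m
    · rw [cls_pos hRQC x h, one_smul]
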